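/- Recurrence of the 1-grid and 2-grid: Let d ∈ {1, 2}. Then the d-grid admits no finite-energy flow out to infinity; that is, every flow θ on the d-grid of finite energy whose divergence is nonnegative at every vertex has divergence equal to 0 at every vertex. -/

import Mathlib

open scoped ENNReal
open Filter

variable {V : Type*}

/-- A *flow* on a graph: an antisymmetric function on ordered pairs of vertices
that vanishes on non-adjacent pairs. -/
def IsFlow (G : SimpleGraph V) (θ : V → V → ℝ) : Prop :=
  (∀ u v, θ u v = -θ v u) ∧ ∀ u v, ¬G.Adj u v → θ u v = 0

/-- The divergence (source strength) of a flow at a vertex. -/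
noncomputable def divg (G : SimpleGraph V) [G.LocallyFinite] (θ : V → V → ℝ) (v : V) : ℝ :=
  ∑ u ∈ G.neighborFinset v, θ v u

/-- The energy `(1/2) ∑ r(u,v) θ(u,v)²` dissipated by a flow, valued in `[0,∞]`. -/
noncomputable def energy (r θ : V → V → ℝ) : ℝ≥0∞ :=
  2⁻¹ * ∑' p : V × V, ENNReal.ofReal (r p.1 p.2 * θ p.1 p.2 ^ 2)

open Classical in
/-- The source distribution with a unit source at `p` and a unit sink at `q`. -/
noncomputable def pointSource (p q v : V) : ℝ :=
  if v = p then 1 else if v = q then -1 else 0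

/-- The odd resistance: the infimum of the energy over all finite-energy unit
flows from `p` to `q`. -/
noncomputable def oddRes (G : SimpleGraph V) [G.LocallyFinite] (r : V → V → ℝ)
    (p q : V) : ℝ≥0∞ :=
  ⨅ (θ : V → V → ℝ) (_ : IsFlow G θ ∧ energy r θ ≠ ⊤ ∧ divg G θ = pointSource p q),
    energy r θ

/-- The cut resistance: the infimum of the energy over all unit flows from `p` to `q`
vanishing on every edge with an endpoint outside `S`. -/
noncomputable def cutRes (G : SimpleGraph V) [G.LocallyFinite] (r : V → V → ℝ)
    (p q : V) (S : Finset V) : ℝ≥0∞ :=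
  ⨅ (θ : V → V → ℝ) (_ : IsFlow G θ ∧ divg G θ = pointSource p q ∧
      ∀ u v, (u ∉ S ∨ v ∉ S) → θ u v = 0), energy r θ

/-- The even resistance: the infimum of the cut resistances over all finite
vertex sets containing `p` and `q`. -/
noncomputable def evenRes (G : SimpleGraph V) [G.LocallyFinite] (r : V → V → ℝ)
    (p q : V) : ℝ≥0∞ :=
  ⨅ (S : Finset V) (_ : p ∈ S ∧ q ∈ S), cutRes G r p q S

/-- The short resistance: the infimum of the energy over all antisymmetric edge
functions supported on edges with at least one endpoint in `S` whose divergence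
at every vertex of `S` is that of a unit flow from `p` to `q`. -/
noncomputable def shortRes (G : SimpleGraph V) [G.LocallyFinite] (r : V → V → ℝ)
    (p q : V) (S : Finset V) : ℝ≥0∞ :=
  ⨅ (θ : V → V → ℝ) (_ : (∀ u v, θ u v = -θ v u) ∧ (∀ u v, ¬G.Adj u v → θ u v = 0) ∧
      (∀ u v, u ∉ S → v ∉ S → θ u v = 0) ∧
      ∀ v ∈ S, divg G θ v = pointSource p q v), energy r θ

/-- A function on the vertices of a network is harmonic if the net current it
induces out of each vertex is zero. -/
def Harmonic (G : SimpleGraph V) [G.LocallyFinite] (r : V → V → ℝ) (u : V → ℝ) : Prop :=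
  ∀ v, ∑ w ∈ G.neighborFinset v, (u v - u w) / r v w = 0

open Classical in
/-- The Dirichlet energy `(1/2) ∑ (u(v)-u(w))²/r(v,w)` of a function on the vertices. -/
noncomputable def fnEnergy (G : SimpleGraph V) (r : V → V → ℝ) (u : V → ℝ) : ℝ≥0∞ :=
  2⁻¹ * ∑' p : V × V,
    if G.Adj p.1 p.2 then ENNReal.ofReal ((u p.1 - u p.2) ^ 2 / r p.1 p.2) else 0

/-- The `d`-grid: vertices are the points of `ℤ^d`, with an edge between two points at
`ℓ¹`-distance `1`. -/
def gridGraph (d : ℕ) : SimpleGraph (Fin d → ℤ) where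
  Adj p q := ∑ i, |p i - q i| = 1
  symm := by
    refine ⟨fun p q h => ?_⟩
    rw [← h]
    exact Finset.sum_congr rfl fun i _ => abs_sub_comm (q i) (p i)
  loopless := by
    refine ⟨fun p h => ?_⟩
    simp only [sub_self, abs_zero, Finset.sum_const_zero] at h
    exact absurd h (by norm_num)

noncomputable instance gridGraph.locallyFinite (d : ℕ) : (gridGraph d).LocallyFinite := by
  intro v
  apply Set.Finite.fintype
  have hsub : (gridGraph d).neighborSet v ⊆
      Set.pi Set.univ fun i => Set.Icc (v i - 1) (v i + 1) := by
    intro w hw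
    have hsum : ∑ i, |v i - w i| = 1 := hw
    rw [Set.mem_pi]
    intro i _
    have hle : |v i - w i| ≤ 1 := by
      calc |v i - w i| ≤ ∑ j, |v j - w j| :=
            Finset.single_le_sum (f := fun j => |v j - w j|) (fun j _ => abs_nonneg _) (Finset.mem_univ i)
        _ = 1 := hsum
    obtain ⟨h1, h2⟩ := abs_le.mp hle
    exact ⟨by linarith, by linarith⟩
  exact (Set.Finite.pi fun i => Set.finite_Icc _ _).subset hsub


namespace GridAux

variable {d : ℕ}

noncomputable def box (d n : ℕ) : Finset (Fin d → ℤ) :=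
  Finset.Icc (fun _ => -(n : ℤ)) (fun _ => (n : ℤ))

lemma mem_box {n : ℕ} {v : Fin d → ℤ} : v ∈ box d n ↔ ∀ i, |v i| ≤ (n : ℤ) := by
  simp only [box, Finset.mem_Icc, Pi.le_def, abs_le, ← forall_and]

lemma box_mono {n m : ℕ} (h : n ≤ m) : box d n ⊆ box d m := by
  intro v hv
  rw [mem_box] at hv ⊢
  exact fun i => (hv i).trans (by exact_mod_cast h)

lemma card_box (n : ℕ) : (box d n).card = (2 * n + 1) ^ d := by
  rw [box, Pi.card_Icc]
  have : ∀ i : Fin d, (Finset.Icc (-(n:ℤ)) (n:ℤ)).card = 2 * n + 1 := by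
    intro i; rw [Int.card_Icc]; omega
  rw [Finset.prod_congr rfl (fun i _ => this i)]
  simp

lemma adj_iff {u w : Fin d → ℤ} : (gridGraph d).Adj u w ↔ ∑ i, |u i - w i| = 1 := Iff.rfl

lemma coord_le_of_adj {u w : Fin d → ℤ} (h : (gridGraph d).Adj u w) (i : Fin d) :
    |u i - w i| ≤ 1 := by
  rw [adj_iff] at h
  calc |u i - w i| ≤ ∑ j, |u j - w j| :=
        Finset.single_le_sum (f := fun j => |u j - w j|) (fun j _ => abs_nonneg _)
          (Finset.mem_univ i)
    _ = 1 := h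

lemma adj_mem_box {n : ℕ} {v u : Fin d → ℤ} (hv : v ∈ box d n)
    (h : (gridGraph d).Adj v u) : u ∈ box d (n + 1) := by
  rw [mem_box] at hv ⊢
  intro i
  have h1 := coord_le_of_adj h i
  have h2 := hv i
  have : |u i| ≤ |v i - u i| + |v i| := by
    have := abs_sub_abs_le_abs_sub (u i) (v i)
    rw [abs_sub_comm (u i) (v i)] at this
    linarith [abs_nonneg (v i)]
  push_cast
  linarith

lemma exists_update_of_adj {u w : Fin d → ℤ} (h : (gridGraph d).Adj u w) :
    ∃ i, w = Function.update u i (u i + 1) ∨ w = Function.update u i (u i - 1) := by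
  rw [adj_iff] at h
  have hex : ∃ i, u i ≠ w i := by
    by_contra hc
    push_neg at hc
    simp only [show ∀ i, u i - w i = 0 from fun i => sub_eq_zero.mpr (hc i), abs_zero,
      Finset.sum_const_zero] at h
    norm_num at h
  obtain ⟨i, hi⟩ := hex
  have hsplit : |u i - w i| + ∑ j ∈ Finset.univ.erase i, |u j - w j| = 1 :=
    (Finset.add_sum_erase Finset.univ (fun j => |u j - w j|) (Finset.mem_univ i)).trans h
  have h1 : 1 ≤ |u i - w i| := Int.one_le_abs (sub_ne_zero.mpr hi)
  have hrest : ∑ j ∈ Finset.univ.erase i, |u j - w j| = 0 := by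
    have : (0:ℤ) ≤ ∑ j ∈ Finset.univ.erase i, |u j - w j| :=
      Finset.sum_nonneg fun j _ => abs_nonneg _
    omega
  have heq : ∀ j ∈ Finset.univ.erase i, |u j - w j| = 0 :=
    (Finset.sum_eq_zero_iff_of_nonneg fun j _ => abs_nonneg _).mp hrest
  have habs : |u i - w i| = 1 := by omega
  refine ⟨i, ?_⟩
  have hw : ∀ j, j ≠ i → w j = u j := by
    intro j hj
    have := abs_eq_zero.mp (heq j (Finset.mem_erase.mpr ⟨hj, Finset.mem_univ j⟩))
    omega
  rcases abs_eq (by norm_num : (0:ℤ) ≤ 1) |>.mp habs with hc | hc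
  · right
    funext j
    by_cases hj : j = i
    · subst hj; rw [Function.update_self]; omega
    · rw [Function.update_of_ne hj]; exact hw j hj
  · left
    funext j
    by_cases hj : j = i
    · subst hj; rw [Function.update_self]; omega
    · rw [Function.update_of_ne hj]; exact hw j hj

lemma degree_le (u : Fin d → ℤ) : ((gridGraph d).neighborFinset u).card ≤ 2 * d := by
  have hsub : (gridGraph d).neighborFinset u ⊆
      Finset.image (fun p : Fin d × Bool =>
        Function.update u p.1 (if p.2 then u p.1 + 1 else u p.1 - 1)) Finset.univ := by
    intro w hw
    rw [SimpleGraph.mem_neighborFinset] at hw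
    obtain ⟨i, hc | hc⟩ := exists_update_of_adj hw
    · exact Finset.mem_image.mpr ⟨(i, true), Finset.mem_univ _, by simp [hc]⟩
    · exact Finset.mem_image.mpr ⟨(i, false), Finset.mem_univ _, by simp [hc]⟩
  calc ((gridGraph d).neighborFinset u).card ≤ _ := Finset.card_le_card hsub
    _ ≤ (Finset.univ : Finset (Fin d × Bool)).card := Finset.card_image_le
    _ = 2 * d := by simp [mul_comm]

open Classical in
noncomputable def edgeCut (d n : ℕ) : Finset ((Fin d → ℤ) × (Fin d → ℤ)) :=
  ((box d n) ×ˢ (box d (n+1) \ box d n)).filter fun p => (gridGraph d).Adj p.1 p.2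

lemma card_edgeCut_le (n : ℕ) :
    (edgeCut d n).card ≤ 2 * d * ((2 * (n+1) + 1) ^ d - (2 * n + 1) ^ d) := by
  have hsub : edgeCut d n ⊆ (box d (n+1) \ box d n).biUnion
      (fun u => ((gridGraph d).neighborFinset u).image fun v => (v, u)) := by
    classical
    intro p hp
    rw [edgeCut, Finset.mem_filter, Finset.mem_product] at hp
    obtain ⟨⟨h1, h2⟩, h3⟩ := hp
    refine Finset.mem_biUnion.mpr ⟨p.2, h2, ?_⟩
    exact Finset.mem_image.mpr ⟨p.1, (SimpleGraph.mem_neighborFinset _ _ _).mpr h3.symm, rfl⟩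
  calc (edgeCut d n).card ≤ _ := Finset.card_le_card hsub
    _ ≤ ∑ u ∈ box d (n+1) \ box d n,
        (((gridGraph d).neighborFinset u).image fun v => (v, u)).card :=
      Finset.card_biUnion_le
    _ ≤ ∑ u ∈ box d (n+1) \ box d n, 2 * d := by
      refine Finset.sum_le_sum fun u _ => ?_
      exact le_trans Finset.card_image_le (degree_le u)
    _ = (box d (n+1) \ box d n).card * (2 * d) := by rw [Finset.sum_const, smul_eq_mul]
    _ = 2 * d * ((2 * (n+1) + 1) ^ d - (2 * n + 1) ^ d) := by
      rw [Finset.card_sdiff_of_subset (box_mono (by omega)), card_box, card_box, mul_comm]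

lemma card_edgeCut_le' (hd : d = 1 ∨ d = 2) (n : ℕ) :
    (edgeCut d n).card ≤ 32 * (n + 1) := by
  refine le_trans (card_edgeCut_le n) ?_
  rcases hd with h | h <;> subst h <;> ring_nf
  · omega
  · generalize n ^ 2 = m
    omega

lemma edgeCut_disjoint {m n : ℕ} (h : m < n) : Disjoint (edgeCut d m) (edgeCut d n) := by
  classical
  rw [Finset.disjoint_left]
  intro p hpm hpn
  rw [edgeCut, Finset.mem_filter, Finset.mem_product] at hpm hpn
  exact (Finset.mem_sdiff.mp hpn.1.2).2
    (box_mono (by omega) (Finset.mem_sdiff.mp hpm.1.2).1)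

lemma sum_divg_eq (θ : (Fin d → ℤ) → (Fin d → ℤ) → ℝ)
    (hflow : IsFlow (gridGraph d) θ) (n : ℕ) :
    ∑ v ∈ box d n, divg (gridGraph d) θ v = ∑ p ∈ edgeCut d n, θ p.1 p.2 := by
  classical
  have h1 : ∀ v ∈ box d n, divg (gridGraph d) θ v = ∑ u ∈ box d (n+1), θ v u := by
    intro v hv
    refine Finset.sum_subset ?_ ?_
    · intro u hu
      exact adj_mem_box hv ((SimpleGraph.mem_neighborFinset _ _ _).mp hu)
    · intro u _ hu
      exact hflow.2 v u fun h => hu ((SimpleGraph.mem_neighborFinset _ _ _).mpr h)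
  rw [Finset.sum_congr rfl h1]
  have hzero : ∑ v ∈ box d n, ∑ u ∈ box d n, θ v u = 0 := by
    have hneg : ∑ v ∈ box d n, ∑ u ∈ box d n, θ v u
        = -∑ v ∈ box d n, ∑ u ∈ box d n, θ v u := by
      calc ∑ v ∈ box d n, ∑ u ∈ box d n, θ v u
          = ∑ v ∈ box d n, ∑ u ∈ box d n, -θ u v :=
            Finset.sum_congr rfl fun v _ => Finset.sum_congr rfl fun u _ => hflow.1 v u
        _ = -∑ v ∈ box d n, ∑ u ∈ box d n, θ u v := by
            simp [Finset.sum_neg_distrib]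
        _ = -∑ u ∈ box d n, ∑ v ∈ box d n, θ u v := by rw [Finset.sum_comm]
        _ = -∑ v ∈ box d n, ∑ u ∈ box d n, θ v u := rfl
    linarith
  have hsplit : ∀ v ∈ box d n, ∑ u ∈ box d (n+1), θ v u
      = ∑ u ∈ box d (n+1) \ box d n, θ v u + ∑ u ∈ box d n, θ v u :=
    fun v _ => (Finset.sum_sdiff (box_mono (by omega))).symm
  rw [Finset.sum_congr rfl hsplit, Finset.sum_add_distrib, hzero, add_zero]
  rw [edgeCut, Finset.sum_filter_of_ne, Finset.sum_product]
  intro p hp hne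
  by_contra hadj
  exact hne (hflow.2 p.1 p.2 hadj)

end GridAux

/-- **Recurrence of the 1-grid and 2-grid**: for `d ∈ {1,2}`, every finite-energy flow on
the `d`-grid whose divergence is nonnegative everywhere has divergence `0` everywhere. -/
theorem grid_recurrent_of_dim_le_two (d : ℕ) (hd : d = 1 ∨ d = 2)
    (θ : (Fin d → ℤ) → (Fin d → ℤ) → ℝ)
    (hflow : IsFlow (gridGraph d) θ) (hfin : energy (fun _ _ => 1) θ ≠ ⊤)
    (hnonneg : ∀ v, 0 ≤ divg (gridGraph d) θ v) :
    ∀ v, divg (gridGraph d) θ v = 0 := by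
  classical
  by_contra hne
  push_neg at hne
  obtain ⟨v₀, hv0⟩ := hne
  have hδ : 0 < divg (gridGraph d) θ v₀ := lt_of_le_of_ne (hnonneg v₀) (Ne.symm hv0)
  set δ := divg (gridGraph d) θ v₀ with hδdef
  set n₀ : ℕ := ∑ i, (v₀ i).natAbs with hn₀
  have hv₀ : ∀ n, n₀ ≤ n → v₀ ∈ GridAux.box d n := by
    intro n hn
    rw [GridAux.mem_box]
    intro i
    have h1 : (v₀ i).natAbs ≤ n₀ :=
      Finset.single_le_sum (f := fun j => (v₀ j).natAbs) (fun j _ => Nat.zero_le _)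
        (Finset.mem_univ i)
    calc |v₀ i| = ((v₀ i).natAbs : ℤ) := Int.abs_eq_natAbs _
      _ ≤ (n : ℤ) := by exact_mod_cast h1.trans hn
  -- flow across the cut is at least δ
  have hS : ∀ n, n₀ ≤ n → δ ≤ ∑ p ∈ GridAux.edgeCut d n, θ p.1 p.2 := by
    intro n hn
    rw [← GridAux.sum_divg_eq θ hflow n]
    exact Finset.single_le_sum (f := fun v => divg (gridGraph d) θ v)
      (fun v _ => hnonneg v) (hv₀ n hn)
  -- Cauchy-Schwarz lower bound on the energy in the cut
  have hQnonneg : ∀ n : ℕ, (0:ℝ) ≤ ∑ p ∈ GridAux.edgeCut d n, θ p.1 p.2 ^ 2 :=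
    fun n => Finset.sum_nonneg fun p _ => sq_nonneg _
  have hQ : ∀ n, n₀ ≤ n →
      δ ^ 2 / (32 * ((n:ℝ) + 1)) ≤ ∑ p ∈ GridAux.edgeCut d n, θ p.1 p.2 ^ 2 := by
    intro n hn
    rw [div_le_iff₀ (by positivity)]
    have h1 : δ ^ 2 ≤ (∑ p ∈ GridAux.edgeCut d n, θ p.1 p.2) ^ 2 :=
      pow_le_pow_left₀ hδ.le (hS n hn) 2
    have h2 : (∑ p ∈ GridAux.edgeCut d n, θ p.1 p.2) ^ 2
        ≤ ((GridAux.edgeCut d n).card : ℝ) * ∑ p ∈ GridAux.edgeCut d n, θ p.1 p.2 ^ 2 :=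
      sq_sum_le_card_mul_sum_sq
    have h3 : ((GridAux.edgeCut d n).card : ℝ) ≤ 32 * ((n:ℝ) + 1) := by
      exact_mod_cast GridAux.card_edgeCut_le' hd n
    calc δ ^ 2 ≤ ((GridAux.edgeCut d n).card : ℝ)
          * ∑ p ∈ GridAux.edgeCut d n, θ p.1 p.2 ^ 2 := h1.trans h2
      _ ≤ (32 * ((n:ℝ) + 1)) * ∑ p ∈ GridAux.edgeCut d n, θ p.1 p.2 ^ 2 :=
          mul_le_mul_of_nonneg_right h3 (hQnonneg n)
      _ = (∑ p ∈ GridAux.edgeCut d n, θ p.1 p.2 ^ 2) * (32 * ((n:ℝ) + 1)) := mul_comm _ _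
  -- the total energy bounds the partial sums
  set T : ℝ≥0∞ := ∑' p : (Fin d → ℤ) × (Fin d → ℤ),
    ENNReal.ofReal ((fun _ _ => (1:ℝ)) p.1 p.2 * θ p.1 p.2 ^ 2) with hT
  have hTne : T ≠ ⊤ := by
    intro h
    apply hfin
    rw [energy, ← hT, h, ENNReal.mul_top (by norm_num)]
  have key : ∀ K : ℕ,
      ∑ k ∈ Finset.range K, ∑ p ∈ GridAux.edgeCut d (n₀ + k), θ p.1 p.2 ^ 2 ≤ T.toReal := by
    intro K
    have hdisj : (Finset.range K : Set ℕ).PairwiseDisjoint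
        (fun k => GridAux.edgeCut d (n₀ + k)) := by
      intro a _ b _ hab
      rcases lt_or_gt_of_ne hab with h | h
      · exact GridAux.edgeCut_disjoint (by omega)
      · exact (GridAux.edgeCut_disjoint (d := d) (by omega)).symm
    have hle : ∑ p ∈ (Finset.range K).biUnion (fun k => GridAux.edgeCut d (n₀ + k)),
        ENNReal.ofReal ((1:ℝ) * θ p.1 p.2 ^ 2) ≤ T := by
      rw [hT]
      exact ENNReal.sum_le_tsum _
    rw [Finset.sum_biUnion hdisj] at hle
    have hrw : ∀ k ∈ Finset.range K, ∑ p ∈ GridAux.edgeCut d (n₀ + k),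
        ENNReal.ofReal ((1:ℝ) * θ p.1 p.2 ^ 2)
        = ENNReal.ofReal (∑ p ∈ GridAux.edgeCut d (n₀ + k), θ p.1 p.2 ^ 2) := by
      intro k _
      rw [ENNReal.ofReal_sum_of_nonneg fun p _ => sq_nonneg _]
      simp
    rw [Finset.sum_congr rfl hrw,
      ← ENNReal.ofReal_sum_of_nonneg fun k _ => hQnonneg (n₀ + k)] at hle
    exact (ENNReal.ofReal_le_iff_le_toReal hTne).mp hle
  -- harmonic series lower bound
  set c : ℝ := δ ^ 2 / (32 * ((n₀:ℝ) + 1)) with hc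
  have hcpos : 0 < c := by positivity
  have hbound : ∀ K : ℕ, c * ∑ k ∈ Finset.range K, (1 / ((k:ℝ) + 1)) ≤ T.toReal := by
    intro K
    refine le_trans ?_ (key K)
    rw [Finset.mul_sum]
    refine Finset.sum_le_sum fun k _ => ?_
    refine le_trans ?_ (hQ (n₀ + k) (by omega))
    rw [hc, div_mul_div_comm, div_le_div_iff₀ (by positivity) (by positivity)]
    push_cast
    have hnk : (n₀:ℝ) + (k:ℝ) + 1 ≤ ((n₀:ℝ) + 1) * ((k:ℝ) + 1) := by
      nlinarith [Nat.cast_nonneg (α := ℝ) n₀, Nat.cast_nonneg (α := ℝ) k]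
    nlinarith [mul_le_mul_of_nonneg_left hnk (sq_nonneg δ)]
  have htend : Tendsto (fun K => c * ∑ k ∈ Finset.range K, (1 / ((k:ℝ) + 1)))
      atTop atTop := by
    have h := Real.tendsto_sum_range_one_div_nat_succ_atTop
    exact Tendsto.const_mul_atTop hcpos h
  obtain ⟨K, hK⟩ := (htend.eventually (eventually_gt_atTop T.toReal)).exists
  exact absurd (hbound K) (not_le.mpr hK)
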